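/- arXiv:2008.05719 — 2 statements merged into one kernel-verified Lean document; each statement's English description precedes it below -/
import Mathlib

section
/- Let L/K be a finite unramified abelian extension of a Henselian discrete valuation field K. Then for every n ≥ 1, the norm map satisfies N_{L/K}(U_n(L)) = U_n(K). In particular, the norm subgroup N_{L/K}(L^×) is an open subgroup of K^×. -/
/-- The higher unit group `U_m(K) = 1 + 𝔪_K^m` (with `U_0(K) = O_K^×`), as a subgroup
of `K^×`: the subgroup generated — indeed, consisting — of the units `v` of the
valuation ring `A` with `v - 1 ∈ 𝔪_A^m`. -/
noncomputable def Um (A : Type*) [CommRing A] [IsDomain A] [IsDiscreteValuationRing A]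
    (K : Type*) [Field K] [Algebra A K] [IsFractionRing A K] (m : ℕ) : Subgroup Kˣ :=
  Subgroup.closure {u : Kˣ | ∃ v : Aˣ, algebraMap A K (v : A) = (u : K) ∧
    ((v : A) - 1) ∈ (IsLocalRing.maximalIdeal A) ^ m}

open IsLocalRing Polynomial

section Hensel

variable {R : Type*} [CommRing R] [HenselianLocalRing R]

/-- Non-monic Hensel's lemma in a Henselian local ring. -/
theorem hensel_nonmonic (f : R[X]) (a₀ : R) (h₁ : f.eval a₀ ∈ maximalIdeal R)
    (h₂ : IsUnit (f.derivative.eval a₀)) :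
    ∃ a : R, f.IsRoot a ∧ a - a₀ ∈ maximalIdeal R := by
  classical
  set h : R[X] := taylor a₀ f with hh
  set c0 : R := f.eval a₀ with hc0def
  set c1 : R := f.derivative.eval a₀ with hc1def
  have hco0 : h.coeff 0 = c0 := taylor_coeff_zero a₀ f
  have hco1 : h.coeff 1 = c1 := taylor_coeff_one a₀ f
  have hnd : 1 ≤ h.natDegree := by
    by_contra hlt
    push_neg at hlt
    have : h.coeff 1 = 0 := coeff_eq_zero_of_natDegree_lt (by omega)
    rw [hco1] at this
    exact h₂.ne_zero this
  set d : ℕ := h.natDegree + 1 with hd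
  obtain ⟨e₀, he₀⟩ : ∃ e₀, d = e₀ + 2 := ⟨h.natDegree - 1, by omega⟩
  set q : R[X] := ∑ k ∈ Finset.Icc 1 d, C (h.coeff k * c0 ^ (k - 1)) * X ^ (d - k) with hq
  set r : R[X] := X ^ d + q with hr
  have h1mem : (1 : ℕ) ∈ Finset.Icc 1 d := Finset.mem_Icc.mpr ⟨le_refl 1, by omega⟩
  have hqdeg : q.degree < (d : ℕ) := by
    apply lt_of_le_of_lt (Polynomial.degree_sum_le _ _)
    rw [Finset.sup_lt_iff (by exact_mod_cast WithBot.bot_lt_coe d)]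
    intro k hk
    apply lt_of_le_of_lt (degree_C_mul_X_pow_le _ _)
    rw [Finset.mem_Icc] at hk
    exact_mod_cast Nat.sub_lt (by omega) (by omega)
  have hrmonic : r.Monic := monic_X_pow_add hqdeg
  set φ := IsLocalRing.residue R with hφ
  have hφc0 : φ c0 = 0 := Ideal.Quotient.eq_zero_iff_mem.mpr h₁
  have hφc1 : φ c1 ≠ 0 := by
    intro e
    exact mem_nonunits_iff.mp ((mem_maximalIdeal _).mp (Ideal.Quotient.eq_zero_iff_mem.mp e)) h₂
  have hreval : ∀ x : R, r.eval x
      = x ^ d + ∑ k ∈ Finset.Icc 1 d, h.coeff k * c0 ^ (k - 1) * x ^ (d - k) := by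
    intro x
    simp [hr, hq, eval_finset_sum]
  -- r(-c1) ∈ 𝔪
  have hre : φ (r.eval (-c1)) = 0 := by
    rw [hreval, map_add, map_pow, map_neg, map_sum]
    rw [Finset.sum_eq_single_of_mem 1 h1mem (fun k hk hk1 => ?_)]
    · simp only [map_mul, map_pow, map_neg, hco1, hφc0, Nat.sub_self, pow_zero, mul_one]
      have hd1 : d - 1 = e₀ + 1 := by omega
      rw [hd1, he₀]
      simp only [pow_succ]
      ring
    · rw [Finset.mem_Icc] at hk
      simp only [map_mul, map_pow, hφc0]
      rw [zero_pow (by omega)]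
      ring
  -- r'(-c1) is a unit
  have hr'eval : r.derivative.eval (-c1)
      = (d : R) * (-c1) ^ (d - 1)
        + ∑ k ∈ Finset.Icc 1 d,
            h.coeff k * c0 ^ (k - 1) * ((d - k : ℕ) * (-c1) ^ (d - k - 1)) := by
    simp only [hr, hq, derivative_add, derivative_X_pow, derivative_sum, derivative_C_mul,
      eval_add, eval_mul, eval_pow, eval_C, eval_natCast, eval_X, eval_finset_sum]
  have hval : φ (r.derivative.eval (-c1)) = (-(φ c1)) ^ (e₀ + 1) := by
    rw [hr'eval, map_add, map_mul, map_pow, map_neg, map_natCast, map_sum]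
    rw [Finset.sum_eq_single_of_mem 1 h1mem (fun k hk hk1 => ?_)]
    · simp only [map_mul, map_pow, map_neg, map_natCast, hco1, hφc0, Nat.sub_self, pow_zero,
        mul_one]
      rw [he₀]
      simp only [show e₀ + 2 - 1 = e₀ + 1 from rfl, show e₀ + 1 - 1 = e₀ from rfl]
      push_cast
      rw [pow_succ]
      ring
    · rw [Finset.mem_Icc] at hk
      simp only [map_mul, map_pow, hφc0]
      rw [zero_pow (by omega)]
      ring
  have hunit : IsUnit (r.derivative.eval (-c1)) := by
    by_contra hnu
    have h0 : φ (r.derivative.eval (-c1)) = 0 :=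
      Ideal.Quotient.eq_zero_iff_mem.mpr ((mem_maximalIdeal _).mpr (mem_nonunits_iff.mpr hnu))
    rw [hval] at h0
    exact pow_ne_zero (e₀ + 1) (neg_ne_zero.mpr hφc1) h0
  obtain ⟨s, hs_root, hs_near⟩ := HenselianLocalRing.is_henselian r hrmonic (-c1)
    (Ideal.Quotient.eq_zero_iff_mem.mp hre) hunit
  -- s is a unit
  have hsu : IsUnit s := by
    by_contra hns
    have hs : s ∈ maximalIdeal R := (mem_maximalIdeal _).mpr (mem_nonunits_iff.mpr hns)
    have : c1 ∈ maximalIdeal R := by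
      have := Ideal.sub_mem _ hs_near hs
      have heq : s - -c1 - s = c1 := by ring
      rwa [heq] at this
    exact mem_nonunits_iff.mp ((mem_maximalIdeal _).mp this) h₂
  obtain ⟨su, hsu_eq⟩ := hsu
  set v : R := ((su⁻¹ : Rˣ) : R) with hv
  have hsv : s * v = 1 := by
    rw [← hsu_eq, hv]
    exact_mod_cast su.mul_inv
  refine ⟨a₀ + c0 * v, ?_, by simpa using Ideal.mul_mem_right v _ h₁⟩
  -- f(a₀ + c0 * v) = 0
  have heval : f.eval (a₀ + c0 * v) = h.eval (c0 * v) := by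
    rw [hh, taylor_eval, add_comm]
  have hkey : h.eval (c0 * v) = c0 * v ^ d * r.eval s := by
    have hsplit : ∀ g : ℕ → R,
        ∑ k ∈ Finset.range (d + 1), g k = g 0 + ∑ k ∈ Finset.Icc 1 d, g k := by
      intro g
      rw [Finset.range_eq_Ico, Finset.sum_eq_sum_Ico_succ_bot (by omega), Finset.Ico_add_one_right_eq_Icc]
    rw [eval_eq_sum_range' (n := d + 1) (by omega), hsplit, hreval s, mul_add, Finset.mul_sum]
    rw [hco0, pow_zero, mul_one]
    congr 1
    · -- c0 = c0 * v^d * s^d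
      rw [show c0 * v ^ d * s ^ d = c0 * (s * v) ^ d by ring, hsv, one_pow, mul_one]
    · refine Finset.sum_congr rfl (fun k hk => ?_)
      rw [Finset.mem_Icc] at hk
      have hk1 : k - 1 + 1 = k := by omega
      have hdk : d - k + k = d := by omega
      calc h.coeff k * (c0 * v) ^ k
          = h.coeff k * c0 ^ k * v ^ k := by rw [mul_pow]; ring
        _ = h.coeff k * c0 ^ k * v ^ k * (s * v) ^ (d - k) := by rw [hsv, one_pow, mul_one]
        _ = h.coeff k * (c0 ^ (k - 1) * c0) * (s ^ (d - k) * (v ^ (d - k) * v ^ k)) := by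
            rw [← pow_succ, hk1, mul_pow]; ring
        _ = c0 * v ^ d * (h.coeff k * c0 ^ (k - 1) * s ^ (d - k)) := by
            rw [← pow_add, hdk]; ring
  rw [IsRoot, heval, hkey, show r.eval s = 0 from hs_root, mul_zero]

end Hensel

section UmLemmas

variable (A : Type*) [CommRing A] [IsDomain A] [IsDiscreteValuationRing A]
    (K : Type*) [Field K] [Algebra A K] [IsFractionRing A K] (m : ℕ)

/-- The set defining `Um` is already a subgroup. -/
noncomputable def UmAux : Subgroup Kˣ where
  carrier := {u : Kˣ | ∃ v : Aˣ, algebraMap A K (v : A) = (u : K) ∧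
    ((v : A) - 1) ∈ (IsLocalRing.maximalIdeal A) ^ m}
  one_mem' := ⟨1, by simp, by simp⟩
  mul_mem' := by
    rintro x y ⟨v, hv, hv1⟩ ⟨w, hw, hw1⟩
    refine ⟨v * w, by simp [hv, hw], ?_⟩
    have heq : ((v * w : Aˣ) : A) - 1 = ((v : A) - 1) * (w : A) + ((w : A) - 1) := by
      push_cast; ring
    rw [heq]
    exact add_mem (Ideal.mul_mem_right _ _ hv1) hw1
  inv_mem' := by
    rintro x ⟨v, hv, hv1⟩
    refine ⟨v⁻¹, ?_, ?_⟩
    · have h1 : algebraMap A K ((v⁻¹ : Aˣ) : A) * algebraMap A K ((v : A)) = 1 := by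
        rw [← map_mul]
        norm_cast
        simp
      rw [hv] at h1
      rw [Units.val_inv_eq_inv_val]
      field_simp at h1 ⊢
      linear_combination h1
    · have heq : ((v⁻¹ : Aˣ) : A) - 1 = -(((v⁻¹ : Aˣ) : A) * ((v : A) - 1)) := by
        have : ((v⁻¹ : Aˣ) : A) * (v : A) = 1 := by norm_cast; simp
        linear_combination this
      rw [heq]
      exact neg_mem (Ideal.mul_mem_left _ _ hv1)

lemma Um_eq_UmAux : Um A K m = UmAux A K m := Subgroup.closure_eq (UmAux A K m)

lemma mem_Um_iff {u : Kˣ} : u ∈ Um A K m ↔ ∃ v : Aˣ, algebraMap A K (v : A) = (u : K) ∧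
    ((v : A) - 1) ∈ (IsLocalRing.maximalIdeal A) ^ m := by
  rw [Um_eq_UmAux]; exact Iff.rfl

end UmLemmas


lemma prod_sub_one_mem {B : Type*} [CommRing B] {I : Ideal B} {ι : Type*} (s : Finset ι)
    (g : ι → B) (hg : ∀ i ∈ s, g i - 1 ∈ I) : (∏ i ∈ s, g i) - 1 ∈ I := by
  classical
  induction s using Finset.induction_on with
  | empty => simp
  | @insert a s hnotmem ih =>
    rw [Finset.prod_insert hnotmem]
    have heq : g a * ∏ i ∈ s, g i - 1
        = (g a - 1) * ∏ i ∈ s, g i + ((∏ i ∈ s, g i) - 1) := by ring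
    rw [heq]
    exact add_mem (Ideal.mul_mem_right _ _ (hg a (Finset.mem_insert_self a s)))
      (ih fun i hi => hg i (Finset.mem_insert_of_mem hi))

lemma isUnit_add_mem_max {R : Type*} [CommRing R] [IsLocalRing R] {a b : R}
    (ha : IsUnit a) (hb : b ∈ maximalIdeal R) : IsUnit (a + b) := by
  by_contra h
  have h1 : a + b ∈ maximalIdeal R := (mem_maximalIdeal _).mpr (mem_nonunits_iff.mpr h)
  have h2 : a ∈ maximalIdeal R := by
    have := Ideal.sub_mem _ h1 hb
    simpa using this
  exact mem_nonunits_iff.mp ((mem_maximalIdeal _).mp h2) ha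


open nonZeroDivisors

/-- Let `L/K` be a finite unramified abelian extension of a Henselian
discrete valuation field `K` (with valuation ring `A`, and `B` the valuation ring of `L`,
the integral closure of `A` in `L`; unramified means the maximal ideal of `A` generates
that of `B` and the residue extension is separable of degree `[L:K]`).  Then for every
`n ≥ 1` the norm map satisfies `N_{L/K}(U_n(L)) = U_n(K)`.  In particular the norm
subgroup `N_{L/K}(L^×)` is an open subgroup of `K^×` (for the topology in which the
`U_n(K)` form a fundamental system of neighbourhoods of `1`, i.e. it contains some
`U_n(K)`). -/
theorem norm_units_filtration_of_unramified_abelian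
    (A : Type*) [CommRing A] [IsDomain A] [IsDiscreteValuationRing A] [HenselianLocalRing A]
    (K : Type*) [Field K] [Algebra A K] [IsFractionRing A K]
    (B : Type*) [CommRing B] [IsDomain B] [IsDiscreteValuationRing B]
    (L : Type*) [Field L] [Algebra B L] [IsFractionRing B L]
    [Algebra K L] [Algebra A L] [Algebra A B]
    [IsScalarTower A K L] [IsScalarTower A B L]
    [FiniteDimensional K L] [IsGalois K L]
    (habelian : ∀ σ τ : L ≃ₐ[K] L, σ * τ = τ * σ)
    [IsIntegralClosure B A L]
    [IsLocalHom (algebraMap A B)]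
    -- unramifiedness: `𝔪_A` generates `𝔪_B` …
    (hram : (IsLocalRing.maximalIdeal A).map (algebraMap A B) = IsLocalRing.maximalIdeal B)
    -- … and the residue field extension is separable of degree `[L:K]`
    (hres : letI := (IsLocalRing.ResidueField.map (algebraMap A B)).toAlgebra
      Algebra.IsSeparable (IsLocalRing.ResidueField A) (IsLocalRing.ResidueField B) ∧
      Module.finrank (IsLocalRing.ResidueField A) (IsLocalRing.ResidueField B) =
        Module.finrank K L) :
    (∀ n : ℕ, 1 ≤ n →
      Subgroup.map (Units.map (Algebra.norm K : L →* K)) (Um B L n) = Um A K n) ∧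
    (∃ n : ℕ, Um A K n ≤ (Units.map (Algebra.norm K : L →* K)).range) := by
  classical
  -- injectivity of the structure maps
  have hALinj : Function.Injective (algebraMap A L) := by
    rw [IsScalarTower.algebraMap_eq A K L]
    exact (algebraMap K L).injective.comp (IsFractionRing.injective A K)
  have hABinj : Function.Injective (algebraMap A B) := by
    have h := hALinj
    rw [IsScalarTower.algebraMap_eq A B L] at h
    exact Function.Injective.of_comp h
  haveI : NoZeroSMulDivisors A L := ⟨fun {c x} h => by rw [Algebra.smul_def, mul_eq_zero, map_eq_zero_iff _ hALinj] at h; exact h⟩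
  haveI : NoZeroSMulDivisors A B := ⟨fun {c x} h => by rw [Algebra.smul_def, mul_eq_zero, map_eq_zero_iff _ hABinj] at h; exact h⟩
  haveI : Module.Finite A B := IsIntegralClosure.finite A K L B
  haveI : Module.Free A B := IsIntegralClosure.module_free A K L B
  haveI : IsLocalization (Algebra.algebraMapSubmonoid B A⁰) L :=
    IsIntegralClosure.isLocalization A K L B
  -- uniformizers
  obtain ⟨ϖ, hϖirr⟩ := IsDiscreteValuationRing.exists_irreducible A
  have hϖspan : maximalIdeal A = Ideal.span {ϖ} :=
    (IsDiscreteValuationRing.irreducible_iff_uniformizer ϖ).mp hϖirr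
  have hspanB : maximalIdeal B = Ideal.span {algebraMap A B ϖ} := by
    rw [← hram, hϖspan, Ideal.map_span, Set.image_singleton]
  have hϖBirr : Irreducible (algebraMap A B ϖ) :=
    (IsDiscreteValuationRing.irreducible_iff_uniformizer _).mpr hspanB
  have hmemB : ∀ (n : ℕ) (x : B), x ∈ (maximalIdeal B) ^ n ↔ (algebraMap A B ϖ) ^ n ∣ x := by
    intro n x
    rw [hspanB, Ideal.span_singleton_pow, Ideal.mem_span_singleton]
  have hmemA : ∀ (n : ℕ) (x : A), x ∈ (maximalIdeal A) ^ n ↔ ϖ ^ n ∣ x := by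
    intro n x
    rw [hϖspan, Ideal.span_singleton_pow, Ideal.mem_span_singleton]
  -- the comap of 𝔪_B^n is 𝔪_A^n
  have hcomap : ∀ (n : ℕ) (x : A), (algebraMap A B ϖ) ^ n ∣ algebraMap A B x → ϖ ^ n ∣ x := by
    intro n
    induction n with
    | zero => exact fun x _ => by simpa using one_dvd x
    | succ n ih =>
      intro x hx
      have hϖdvd : ϖ ∣ x := by
        by_cases hxu : IsUnit x
        · exfalso
          have h1 : algebraMap A B ϖ ∣ algebraMap A B x :=
            dvd_trans (dvd_pow_self _ (Nat.succ_ne_zero n)) hx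
          exact hϖBirr.not_isUnit (isUnit_of_dvd_unit h1 (hxu.map _))
        · have hmem : x ∈ maximalIdeal A := (mem_maximalIdeal x).mpr (mem_nonunits_iff.mpr hxu)
          rw [hϖspan, Ideal.mem_span_singleton] at hmem
          exact hmem
      obtain ⟨y, rfl⟩ := hϖdvd
      rw [map_mul, pow_succ'] at hx
      have hy : (algebraMap A B ϖ) ^ n ∣ algebraMap A B y :=
        (mul_dvd_mul_iff_left hϖBirr.ne_zero).mp hx
      rw [pow_succ']
      exact mul_dvd_mul_left ϖ (ih y hy)
  -- Galois action preserves powers of the maximal ideal of B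
  have hgal : ∀ (n : ℕ) (σ : B ≃ₐ[A] B) (x : B),
      x ∈ (maximalIdeal B) ^ n → σ x ∈ (maximalIdeal B) ^ n := by
    intro n σ x hx
    rw [hmemB] at hx ⊢
    obtain ⟨y, rfl⟩ := hx
    exact ⟨σ y, by rw [map_mul, map_pow, AlgEquiv.commutes]⟩
  -- norm is compatible with localization
  have hnormloc : ∀ x : B,
      algebraMap A K (Algebra.norm A x) = Algebra.norm K (algebraMap B L x) :=
    fun x => (Algebra.norm_localization A A⁰ x).symm
  -- norm as product over the Galois group
  have hprod : ∀ x : B,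
      algebraMap A B (Algebra.norm A x) = ∏ σ : L ≃ₐ[K] L, galRestrict A K L B σ x := by
    intro x
    rw [prod_galRestrict_eq_norm A K L B x]
    congr 1
    apply IsFractionRing.injective A K
    rw [hnormloc, IsIntegralClosure.algebraMap_mk']
  -- norms of principal units are principal units
  have hnormmem : ∀ (n : ℕ) (w : B), w - 1 ∈ (maximalIdeal B) ^ n →
      Algebra.norm A w - 1 ∈ (maximalIdeal A) ^ n := by
    intro n w hw
    have hfac : ∀ σ : L ≃ₐ[K] L, galRestrict A K L B σ w - 1 ∈ (maximalIdeal B) ^ n := by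
      intro σ
      have : galRestrict A K L B σ w - 1 = galRestrict A K L B σ (w - 1) := by
        rw [map_sub, map_one]
      rw [this]
      exact hgal n _ _ hw
    have hprodmem : (∏ σ : L ≃ₐ[K] L, galRestrict A K L B σ w) - 1 ∈ (maximalIdeal B) ^ n :=
      prod_sub_one_mem _ _ (fun σ _ => hfac σ)
    rw [← hprod] at hprodmem
    rw [hmemA]
    apply hcomap n
    rw [map_sub, map_one]
    exact (hmemB n _).mp hprodmem
  -- existence of an element of B with unit trace
  have htrace : ∃ e : B, IsUnit (Algebra.trace A B e) := by
    letI : Algebra (ResidueField A) (ResidueField B) :=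
      (ResidueField.map (algebraMap A B)).toAlgebra
    obtain ⟨hsep, hrank⟩ := hres
    haveI := hsep
    haveI : FiniteDimensional (ResidueField A) (ResidueField B) := by
      apply FiniteDimensional.of_finrank_pos
      rw [hrank]
      exact Module.finrank_pos
    haveI : @Module.Finite (ResidueField A) (ResidueField B) _ _ Algebra.toModule := by
      convert this using 2
      ext x y
      obtain ⟨a, rfl⟩ := IsLocalRing.residue_surjective x
      obtain ⟨b, rfl⟩ := IsLocalRing.residue_surjective y
      show ResidueField.map (algebraMap A B) (residue A a) * residue B b = _
      rw [ResidueField.map_residue]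
      rw [← map_mul, ← Algebra.smul_def]; rfl
    obtain ⟨ξ, hξ⟩ := Algebra.trace_surjective (ResidueField A) (ResidueField B) 1
    let e₂ : (B ⧸ (maximalIdeal A).map (algebraMap A B)) ≃+* ResidueField B :=
      Ideal.quotEquivOfEq hram
    obtain ⟨x, hx⟩ := Ideal.Quotient.mk_surjective (e₂.symm ξ)
    refine ⟨x, ?_⟩
    let e₁ : (A ⧸ maximalIdeal A) ≃+* ResidueField A := RingEquiv.refl _
    have hcomm : (algebraMap (ResidueField A) (ResidueField B)).comp
          (e₁ : (A ⧸ maximalIdeal A) →+* ResidueField A)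
        = (e₂ : (B ⧸ (maximalIdeal A).map (algebraMap A B)) →+* ResidueField B).comp
          (algebraMap (A ⧸ maximalIdeal A) (B ⧸ (maximalIdeal A).map (algebraMap A B))) := by
      apply RingHom.ext
      intro z
      obtain ⟨a, rfl⟩ := Ideal.Quotient.mk_surjective z
      simp only [RingHom.coe_comp, Function.comp_apply, RingEquiv.coe_ringHom_refl,
        RingHom.id_apply]
      rw [Ideal.Quotient.algebraMap_quotient_map_quotient]
      show ResidueField.map (algebraMap A B) (residue A a) = e₂ (Ideal.Quotient.mk _ _)
      rw [ResidueField.map_residue]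
      simp only [e₂, Ideal.quotEquivOfEq_mk]
      rfl
    have htr := Algebra.trace_eq_of_equiv_equiv e₁ e₂ hcomm
      (Ideal.Quotient.mk ((maximalIdeal A).map (algebraMap A B)) x)
    rw [Algebra.trace_quotient_mk, hx, RingEquiv.apply_symm_apply, hξ] at htr
    -- htr : mk (trace A B x) = refl.symm 1 = 1
    by_contra hnu
    have hmem : Algebra.trace A B x ∈ maximalIdeal A :=
      (mem_maximalIdeal _).mpr (mem_nonunits_iff.mpr hnu)
    rw [← Ideal.Quotient.eq_zero_iff_mem] at hmem
    rw [hmem] at htr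
    exact zero_ne_one (htr.trans (by simp))
  obtain ⟨e, hetr⟩ := htrace
  obtain ⟨trU, htrU⟩ := hetr
  -- the determinant polynomial controlling norms of 1 + s • e
  let ι := Module.Free.ChooseBasisIndex A B
  let b : Module.Basis ι A B := Module.Free.chooseBasis A B
  let M := Algebra.leftMulMatrix b e
  let D : A[X] := (1 + (X : A[X]) • M.map C).det
  have hkey : ∀ s : A, Algebra.norm A (1 + s • e)
      = 1 + Algebra.trace A B e * s + D.divX.divX.eval s * s ^ 2 := by
    intro s
    rw [Algebra.norm_eq_matrix_det b, Algebra.trace_eq_matrix_trace b]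
    rw [map_add, map_one, map_smul]
    exact Matrix.det_one_add_smul s M
  -- main statement, part 1
  have hmain : ∀ n : ℕ, 1 ≤ n →
      Subgroup.map (Units.map (Algebra.norm K : L →* K)) (Um B L n) = Um A K n := by
    intro n hn
    apply le_antisymm
    · rw [Subgroup.map_le_iff_le_comap]
      intro uL huL
      rw [Subgroup.mem_comap]
      rw [mem_Um_iff B L n] at huL
      rw [mem_Um_iff A K n]
      obtain ⟨w, hw, hw1⟩ := huL
      refine ⟨Units.map (Algebra.norm A : B →* A) w, ?_, ?_⟩
      · show algebraMap A K (Algebra.norm A (w : B)) = _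
        rw [Units.coe_map]
        show _ = Algebra.norm K (uL : L)
        rw [hnormloc, hw]
      · exact hnormmem n w hw1
    · intro u hu
      rw [mem_Um_iff A K n] at hu
      obtain ⟨v, hv, hv1⟩ := hu
      obtain ⟨c, hc⟩ : ∃ c : A, (v : A) - 1 = ϖ ^ n * c := (hmemA n _).mp hv1
      -- the Hensel polynomial
      let Q : A[X] := X ^ 2 * (D.divX.divX.comp (C (ϖ ^ n) * X))
      let G : A[X] := C (Algebra.trace A B e) * X + C (ϖ ^ n) * Q - C c
      have hGeval : ∀ t : A,
          ϖ ^ n * G.eval t = Algebra.norm A (1 + (ϖ ^ n * t) • e) - (v : A) := by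
        intro t
        rw [hkey]
        simp only [G, Q, eval_sub, eval_add, eval_mul, eval_pow, eval_C, eval_X, eval_comp]
        linear_combination hc
      have hϖmem : ϖ ^ n ∈ maximalIdeal A := by
        rw [hϖspan, Ideal.mem_span_singleton]
        exact dvd_pow_self ϖ (by omega)
      set t₀ : A := ((trU⁻¹ : Aˣ) : A) * c with ht₀
      have htrc : Algebra.trace A B e * t₀ = c := by
        rw [ht₀, ← htrU, ← mul_assoc]
        norm_cast
        simp
      have h₁ : G.eval t₀ ∈ maximalIdeal A := by
        have hform : G.eval t₀ = ϖ ^ n * Q.eval t₀ := by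
          simp only [G, eval_sub, eval_add, eval_mul, eval_C, eval_X]
          rw [htrc]
          ring
        rw [hform]
        exact Ideal.mul_mem_right _ _ hϖmem
      have h₂ : IsUnit (G.derivative.eval t₀) := by
        have hform : G.derivative.eval t₀
            = Algebra.trace A B e + ϖ ^ n * Q.derivative.eval t₀ := by
          simp only [G, derivative_sub, derivative_add, derivative_C_mul, derivative_C,
            derivative_X, eval_sub, eval_add, eval_mul, eval_C, eval_X, mul_one, sub_zero]
        rw [hform]
        exact isUnit_add_mem_max ⟨trU, htrU⟩ (Ideal.mul_mem_right _ _ hϖmem)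
      obtain ⟨t, htroot, -⟩ := hensel_nonmonic G t₀ h₁ h₂
      have hnorm_eq : Algebra.norm A (1 + (ϖ ^ n * t) • e) = (v : A) := by
        have h0 := hGeval t
        rw [show G.eval t = 0 from htroot, mul_zero] at h0
        exact sub_eq_zero.mp h0.symm
      set uB : B := 1 + (ϖ ^ n * t) • e with huBdef
      have huB1 : uB - 1 ∈ (maximalIdeal B) ^ n := by
        rw [hmemB]
        refine ⟨algebraMap A B t * e, ?_⟩
        rw [huBdef, add_sub_cancel_left, Algebra.smul_def, map_mul, map_pow]
        ring
      have huBunit : IsUnit uB := by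
        have hm : uB - 1 ∈ maximalIdeal B :=
          Ideal.pow_le_self (by omega) huB1
        have heq : uB = 1 + (uB - 1) := by ring
        rw [heq]
        exact isUnit_add_mem_max isUnit_one hm
      obtain ⟨w, hwu⟩ := huBunit
      refine Subgroup.mem_map.mpr
        ⟨Units.map (algebraMap B L : B →* L) w, ?_, ?_⟩
      · rw [mem_Um_iff B L n]
        exact ⟨w, by rw [Units.coe_map]; rfl, by rw [hwu]; exact huB1⟩
      · apply Units.ext
        rw [Units.coe_map, Units.coe_map]
        show Algebra.norm K (algebraMap B L (w : B)) = (u : K)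
        rw [← hnormloc, hwu, hnorm_eq, hv]
  refine ⟨hmain, ⟨1, ?_⟩⟩
  rw [← hmain 1 le_rfl]
  rintro _ ⟨x, _, rfl⟩
  exact ⟨x, rfl⟩
end

section
/- Let L/K be a finite cyclic extension of a Henselian discrete valuation field K. Then the norm subgroup N_{L/K}(L^×) is an open subgroup of K^×. -/
open Polynomial


theorem exists_root_aux {R : Type*} [CommRing R] [HenselianLocalRing R]
    (G : R[X]) (e : ℕ) (hdeg : G.natDegree ≤ e + 1)
    (h0 : G.coeff 0 = 1) (h1 : G.coeff 1 = 1)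
    (h2 : ∀ i, 2 ≤ i → G.coeff i ∈ IsLocalRing.maximalIdeal R) :
    ∃ s : R, G.eval s = 0 := by
  have hone : (1 : R) ∉ IsLocalRing.maximalIdeal R := by
    intro h
    exact (IsLocalRing.maximalIdeal.isMaximal R).ne_top ((Ideal.eq_top_iff_one _).mpr h)
  set H : R[X] := G.reflect (e + 1) with hHdef
  have hH : ∀ i, H.coeff i = G.coeff ((revAt (e+1)) i) := fun i => coeff_reflect _ _ _
  have hHle : H.natDegree ≤ e + 1 := by
    rw [natDegree_le_iff_coeff_eq_zero]
    intro N hN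
    rw [hH, revAt_eq_self_of_lt hN]
    exact coeff_eq_zero_of_natDegree_lt (lt_of_le_of_lt hdeg hN)
  have hHtop : H.coeff (e + 1) = 1 := by
    rw [hH, revAt_le (le_refl _), Nat.sub_self, h0]
  have hmonic : H.Monic := monic_of_natDegree_le_of_coeff_eq_one _ hHle hHtop
  have heval : ∀ x : R, H.eval x = ∑ j ∈ Finset.range (e + 2),
      G.coeff j * x ^ (e + 1 - j) := by
    intro x
    rw [eval_eq_sum_range' (lt_of_le_of_lt hHle (Nat.lt_succ_self _))]
    rw [← Finset.sum_range_reflect]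
    refine Finset.sum_congr rfl fun j hj => ?_
    rw [Finset.mem_range] at hj
    have hj' : j ≤ e + 1 := Nat.lt_succ_iff.mp hj
    have h1 : e + 2 - 1 - j = e + 1 - j := by omega
    rw [h1, hH, revAt_le (by omega : e + 1 - j ≤ e + 1), Nat.sub_sub_self hj']
  have hder : ∀ x : R, H.derivative.eval x = ∑ j ∈ Finset.range (e + 1),
      G.coeff j * ((e + 1 - j : ℕ) : R) * x ^ (e - j) := by
    intro x
    have hdd : H.derivative.natDegree < e + 1 :=
      lt_of_le_of_lt (natDegree_derivative_le H) (by omega)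
    rw [eval_eq_sum_range' hdd, ← Finset.sum_range_reflect]
    refine Finset.sum_congr rfl fun j hj => ?_
    rw [Finset.mem_range] at hj
    have h1 : e + 1 - 1 - j = e - j := by omega
    rw [h1, coeff_derivative, hH, revAt_le (by omega : e - j + 1 ≤ e + 1)]
    have h2 : e + 1 - (e - j + 1) = j := by omega
    rw [h2]
    have h3 : ((e - j : ℕ) : R) + 1 = ((e + 1 - j : ℕ) : R) := by
      have : e + 1 - j = (e - j) + 1 := by omega
      rw [this]; push_cast; ring
    rw [← h3]
  have hev : H.eval (-1 : R) ∈ IsLocalRing.maximalIdeal R := by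
    rw [heval]
    rw [Finset.sum_range_succ', Finset.sum_range_succ']
    have hB : G.coeff (0 + 1) * (-1 : R) ^ (e + 1 - (0 + 1)) = (-1) ^ e := by
      simp [h1]
    have hC : G.coeff 0 * (-1 : R) ^ (e + 1 - 0) = -(-1) ^ e := by
      simp [h0, pow_succ]
    rw [hB, hC, add_assoc]
    simp only [add_neg_cancel, add_zero]
    refine Ideal.sum_mem _ fun i _ => Ideal.mul_mem_right _ _ (h2 _ (by omega))
  have hderu : IsUnit (H.derivative.eval (-1 : R)) := by
    by_contra hne
    have hmem : H.derivative.eval (-1 : R) ∈ IsLocalRing.maximalIdeal R :=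
      (IsLocalRing.mem_maximalIdeal _).mpr hne
    rw [hder] at hmem
    rcases e with _ | e'
    · apply hone
      simpa [h0] using hmem
    · rw [Finset.sum_range_succ', Finset.sum_range_succ'] at hmem
      have hB : G.coeff (0 + 1) * ((e' + 1 + 1 - (0 + 1) : ℕ) : R) * (-1 : R) ^ (e' + 1 - (0 + 1))
          = ((e' + 1 : ℕ) : R) * (-1) ^ e' := by
        simp [h1]
      have hC : G.coeff 0 * ((e' + 1 + 1 - 0 : ℕ) : R) * (-1 : R) ^ (e' + 1 - 0)
          = -(((e' + 2 : ℕ) : R) * (-1) ^ e') := by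
        rw [h0, one_mul]
        have : e' + 1 + 1 - 0 = e' + 2 := by omega
        rw [this]
        have : e' + 1 - 0 = e' + 1 := by omega
        rw [this, pow_succ]
        ring
      rw [hB, hC] at hmem
      have hsum : (∑ i ∈ Finset.range e',
          G.coeff (i + 1 + 1) * ((e' + 1 + 1 - (i + 1 + 1) : ℕ) : R) * (-1 : R) ^ (e' + 1 - (i + 1 + 1)))
          ∈ IsLocalRing.maximalIdeal R :=
        Ideal.sum_mem _ fun i _ => Ideal.mul_mem_right _ _
          (Ideal.mul_mem_right _ _ (h2 _ (by omega)))
      have hrest : ((e' + 1 : ℕ) : R) * (-1) ^ e' + -(((e' + 2 : ℕ) : R) * (-1) ^ e')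
          ∈ IsLocalRing.maximalIdeal R := by
        rw [add_assoc] at hmem
        have := Ideal.sub_mem _ hmem hsum
        simpa using this
      have hval : ((e' + 1 : ℕ) : R) * (-1) ^ e' + -(((e' + 2 : ℕ) : R) * (-1) ^ e')
          = -(-1 : R) ^ e' := by
        push_cast
        ring
      rw [hval] at hrest
      have h1m : (-(-1 : R) ^ e') * (-(-1 : R) ^ e') ∈ IsLocalRing.maximalIdeal R :=
        Ideal.mul_mem_left _ _ hrest
      rw [neg_mul_neg, ← pow_add] at h1m
      have : ((-1 : R) ^ (e' + e')) = 1 := Even.neg_one_pow ⟨e', rfl⟩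
      rw [this] at h1m
      exact hone h1m
  obtain ⟨w, hwroot, hwnear⟩ := HenselianLocalRing.is_henselian H hmonic (-1) hev hderu
  have hwu : IsUnit w := by
    by_contra hw
    have : w ∈ IsLocalRing.maximalIdeal R := (IsLocalRing.mem_maximalIdeal _).mpr hw
    have : (1 : R) ∈ IsLocalRing.maximalIdeal R := by
      have := Ideal.sub_mem _ hwnear this
      simpa using this
    exact hone this
  obtain ⟨wu, hwu⟩ := hwu
  refine ⟨((wu⁻¹ : Rˣ) : R), ?_⟩
  haveI : Invertible ((wu⁻¹ : Rˣ) : R) := (wu⁻¹).invertible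
  have hio : (⅟((wu⁻¹ : Rˣ) : R) : R) = (wu : R) := by
    rw [invOf_units, inv_inv]
  have := (eval₂_reflect_eq_zero_iff (RingHom.id R) ((wu⁻¹ : Rˣ) : R) (e + 1) G hdeg).mp ?_
  · exact this
  · rw [hio]
    show (G.reflect (e+1)).eval ((wu : R)) = 0
    rw [← hHdef, hwu]
    exact hwroot

/-- Let `L/K` be a finite cyclic (Galois) extension of a Henselian
discrete valuation field `K` (with valuation ring `A`).  Then the norm subgroup
`N_{L/K}(L^×)` is an open subgroup of `K^×` — for the topology in which the `U_n(K)`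
form a fundamental system of neighbourhoods of `1`, this means that it contains `U_n(K)`
for some `n`. -/
theorem norm_subgroup_open_of_cyclic
    (A : Type*) [CommRing A] [IsDomain A] [IsDiscreteValuationRing A] [HenselianLocalRing A]
    (K : Type*) [Field K] [Algebra A K] [IsFractionRing A K]
    (L : Type*) [Field L] [Algebra K L] [FiniteDimensional K L] [IsGalois K L]
    [IsCyclic (L ≃ₐ[K] L)] :
    ∃ n : ℕ, Um A K n ≤ (Units.map (Algebra.norm K : L →* K)).range := by
  classical
  letI : Algebra A L := ((algebraMap K L).comp (algebraMap A K)).toAlgebra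
  haveI : IsScalarTower A K L := IsScalarTower.of_algebraMap_eq fun a => rfl
  have hAK : Function.Injective (algebraMap A K) := IsFractionRing.injective A K
  have hKL : Function.Injective (algebraMap K L) := (algebraMap K L).injective
  have hAL : Function.Injective (algebraMap A L) := by
    rw [IsScalarTower.algebraMap_eq A K L]
    exact hKL.comp hAK
  -- choose an integral element with nonzero trace
  obtain ⟨β, hβ⟩ : ∃ β : L, Algebra.trace K L β ≠ 0 := by
    by_contra h
    push_neg at h
    exact Algebra.trace_ne_zero K L (LinearMap.ext fun x => by simpa using h x)
  have hβalg : IsAlgebraic A β :=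
    (IsFractionRing.isAlgebraic_iff A K L).mpr (Algebra.IsAlgebraic.isAlgebraic β)
  obtain ⟨x0, y0, hy0, hxy⟩ : ∃ x0 : integralClosure A L, ∃ y0 : A, y0 ≠ 0 ∧
      algebraMap A L y0 * β = x0 := by
    obtain ⟨y0, hy0, hint⟩ := hβalg.exists_integral_multiple
    exact ⟨⟨_, hint⟩, y0, hy0, (Algebra.smul_def y0 β).symm⟩
  set α : L := algebraMap A L y0 * β with hαdef
  have hαint : IsIntegral A α := by rw [hxy]; exact x0.2
  have hTrα : Algebra.trace K L α ≠ 0 := by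
    have htr : Algebra.trace K L α = algebraMap A K y0 * Algebra.trace K L β := by
      rw [hαdef, IsScalarTower.algebraMap_apply A K L, ← Algebra.smul_def, map_smul, smul_eq_mul]
    rw [htr]
    exact mul_ne_zero (fun h => hy0 (hAK (by rw [h, map_zero]))) hβ
  -- the polynomial Q = ∏ (1 + σ(α) X) over L
  set Q : L[X] := ∏ σ : L ≃ₐ[K] L, (C (σ α) * X + 1) with hQdef
  have key01 : ∀ s : Finset (L ≃ₐ[K] L), (∏ σ ∈ s, (C (σ α) * X + 1)).coeff 0 = 1 ∧
      (∏ σ ∈ s, (C (σ α) * X + 1)).coeff 1 = ∑ σ ∈ s, σ α := by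
    refine Finset.cons_induction (by simp [coeff_one]) ?_
    intro a s ha ih
    rw [Finset.prod_cons, Finset.sum_cons]
    constructor
    · rw [mul_coeff_zero, ih.1]
      simp
    · have expand : (C (a α) * X + 1) * (∏ σ ∈ s, (C (σ α) * X + 1))
          = C (a α) * (X * ∏ σ ∈ s, (C (σ α) * X + 1)) + ∏ σ ∈ s, (C (σ α) * X + 1) := by
        ring
      rw [expand, coeff_add, coeff_C_mul, coeff_X_mul, ih.1, ih.2, mul_one]
  have hQ0 : Q.coeff 0 = 1 := by rw [hQdef]; exact (key01 Finset.univ).1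
  have hQ1 : Q.coeff 1 = algebraMap K L (Algebra.trace K L α) := by
    rw [hQdef, (key01 Finset.univ).2, trace_eq_sum_automorphisms]
  have hQint : ∀ i, Q.coeff i ∈ integralClosure A L := by
    rw [hQdef]
    refine Finset.prod_induction _ (fun q : L[X] => ∀ i, q.coeff i ∈ integralClosure A L)
      (fun p q hp hq i => by
        rw [coeff_mul]; exact sum_mem fun x _ => mul_mem (hp _) (hq _))
      (fun i => by
        rw [coeff_one]; split_ifs; exacts [one_mem _, zero_mem _])
      (fun σ _ i => ?_)
    have hσ : IsIntegral A (σ α) := hαint.map (σ.restrictScalars A)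
    rcases i with _ | _ | i <;>
      simp [coeff_one, coeff_C_mul, coeff_X] <;>
      first
        | exact one_mem _
        | exact hσ
        | exact zero_mem _
  have hQfix : ∀ (τ : L ≃ₐ[K] L) (i : ℕ), τ (Q.coeff i) = Q.coeff i := by
    intro τ i
    have hmap : Q.map τ.toAlgHom.toRingHom = Q := by
      rw [hQdef, ← coe_mapRingHom, map_prod]
      refine Fintype.prod_equiv (Equiv.mulLeft τ) _ _ fun σ => ?_
      simp only [coe_mapRingHom, Polynomial.map_add, Polynomial.map_mul, map_C, map_X,
        Polynomial.map_one, Equiv.coe_mulLeft, AlgEquiv.mul_apply]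
      rfl
    conv_rhs => rw [← hmap]
    rw [coeff_map]
    rfl
  have hQbot : ∀ i, Q.coeff i ∈ (⊥ : IntermediateField K L) := by
    intro i
    rw [← IsGalois.fixedField_fixingSubgroup (⊥ : IntermediateField K L)]
    exact fun g => hQfix g.1 i
  have hQrange : ∀ i, Q.coeff i ∈ Set.range (algebraMap A L) := by
    intro i
    obtain ⟨k, hk⟩ := IntermediateField.mem_bot.mp (hQbot i)
    have hki : IsIntegral A k := by
      rw [← isIntegral_algebraMap_iff hKL]
      rw [hk]
      exact hQint i
    obtain ⟨a, ha⟩ := IsIntegrallyClosed.isIntegral_iff.mp hki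
    exact ⟨a, by rw [IsScalarTower.algebraMap_apply A K L, ha, hk]⟩
  obtain ⟨f, hfmap⟩ : ∃ f : A[X], f.map (algebraMap A L) = Q :=
    (Polynomial.mem_lifts _).mp ((Polynomial.lifts_iff_coeff_lifts _).mpr hQrange)
  have hf0 : f.coeff 0 = 1 := hAL (by rw [← coeff_map, hfmap, hQ0, map_one])
  set c : A := f.coeff 1 with hcdef
  have hcL : algebraMap A L c = algebraMap K L (Algebra.trace K L α) := by
    rw [hcdef, ← coeff_map, hfmap, hQ1]
  have hc0 : c ≠ 0 := by
    intro h
    apply hTrα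
    apply hKL
    rw [← hcL, h, map_zero, map_zero]
  have hnorm : ∀ t : A, algebraMap K L (Algebra.norm K ((1 : L) + algebraMap A L t * α))
      = algebraMap K L (algebraMap A K (f.eval t)) := by
    intro t
    rw [Algebra.norm_eq_prod_automorphisms]
    have h1 : ∀ σ : L ≃ₐ[K] L, σ ((1 : L) + algebraMap A L t * α)
        = 1 + algebraMap A L t * σ α := by
      intro σ
      rw [map_add, map_one, map_mul]
      congr 2
      rw [IsScalarTower.algebraMap_apply A K L]
      exact σ.commutes _
    rw [Finset.prod_congr rfl fun σ _ => h1 σ]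
    have h2 : algebraMap K L (algebraMap A K (f.eval t))
        = (f.map (algebraMap A L)).eval (algebraMap A L t) := by
      rw [← IsScalarTower.algebraMap_apply, eval_map, eval₂_at_apply]
    rw [h2, hfmap, hQdef, eval_prod]
    refine Finset.prod_congr rfl fun σ _ => ?_
    simp only [eval_add, eval_mul, eval_C, eval_X, eval_one]
    ring
  -- the valuation of c
  obtain ⟨ϖ, hϖ⟩ := IsDiscreteValuationRing.exists_irreducible A
  obtain ⟨k, uc, hcfact⟩ := IsDiscreteValuationRing.eq_unit_mul_pow_irreducible hc0 hϖ
  have hϖm : ϖ ∈ IsLocalRing.maximalIdeal A :=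
    (IsLocalRing.mem_maximalIdeal _).mpr hϖ.not_isUnit
  refine ⟨2 * k + 1, (Subgroup.closure_le _).mpr ?_⟩
  rintro u ⟨v, hvu, hv⟩
  rw [hϖ.maximalIdeal_eq, Ideal.span_singleton_pow, Ideal.mem_span_singleton'] at hv
  obtain ⟨y, hy⟩ := hv
  set e : A := -(((uc⁻¹ : Aˣ) : A) ^ 2 * (ϖ * y)) with hedef
  have hce : (1 : A) - (v : A) = c ^ 2 * e := by
    have huc : ((uc : A)) * ((uc⁻¹ : Aˣ) : A) = 1 := by
      exact_mod_cast Units.mul_inv uc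
    have h2 : c ^ 2 * e = -(ϖ ^ (2 * k + 1) * y * ((uc : A) * ((uc⁻¹ : Aˣ) : A)) ^ 2) := by
      rw [hcfact, hedef]; ring
    have h3 : ϖ ^ (2 * k + 1) * y = (v : A) - 1 := by rw [mul_comm]; exact hy
    rw [h2, huc, one_pow, mul_one, h3]
    ring
  have hem : e ∈ IsLocalRing.maximalIdeal A := by
    rw [hedef]
    exact (Ideal.neg_mem_iff _).mpr (Ideal.mul_mem_left _ _ (Ideal.mul_mem_right _ _ hϖm))
  -- build the auxiliary polynomial G over A
  set D : ℕ := max f.natDegree 1 with hDdef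
  have hfD : f.natDegree < D + 1 := lt_of_le_of_lt (le_max_left _ _) (Nat.lt_succ_self _)
  set g : ℕ → A := fun i => if i = 0 then 1 else if i = 1 then 1
    else f.coeff i * c ^ (i - 2) * e ^ (i - 1) with hgdef
  set G : A[X] := ∑ i ∈ Finset.range (D + 1), monomial i (g i) with hGdef
  have hGcoeff : ∀ j, G.coeff j = if j < D + 1 then g j else 0 := by
    intro j
    rw [hGdef, finset_sum_coeff]
    simp only [coeff_monomial]
    rw [Finset.sum_ite_eq' (Finset.range (D + 1)) j g]
    simp [Finset.mem_range]
  have hGdeg : G.natDegree ≤ D := natDegree_le_iff_coeff_eq_zero.mpr fun N hN => by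
    rw [hGcoeff, if_neg (by omega)]
  obtain ⟨E, hE⟩ : ∃ E, D = E + 1 := ⟨D - 1, by omega⟩
  obtain ⟨s, hs⟩ := exists_root_aux G E (by omega)
    (by rw [hGcoeff, if_pos (by omega)]; simp [hgdef])
    (by rw [hGcoeff, if_pos (by omega)]; simp [hgdef])
    (by
      intro i hi
      rw [hGcoeff]
      split_ifs with h
      · have : g i = f.coeff i * c ^ (i - 2) * e ^ (i - 1) := by
          rw [hgdef]; simp only []
          rw [if_neg (by omega), if_neg (by omega)]
        rw [this]
        exact Ideal.mul_mem_left _ _ (Ideal.pow_mem_of_mem _ hem _ (by omega))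
      · exact zero_mem _)
  set t : A := c * e * s with htdef
  have hft : f.eval t = (v : A) := by
    have hG : G.eval s = ∑ i ∈ Finset.range (D + 1), g i * s ^ i := by
      rw [eval_eq_sum_range' (lt_of_le_of_lt hGdeg (Nat.lt_succ_self _))]
      exact Finset.sum_congr rfl fun i hi => by
        rw [hGcoeff, if_pos (Finset.mem_range.mp hi)]
    have hfe : f.eval t = ∑ i ∈ Finset.range (D + 1), f.coeff i * t ^ i :=
      eval_eq_sum_range' hfD _
    have key : ∀ i ∈ Finset.range (D + 1),
        f.coeff i * t ^ i = (if i = 0 then (v : A) else 0) + c ^ 2 * e * (g i * s ^ i) := by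
      intro i _
      rcases i with _ | i
      · have hg0 : g 0 = 1 := by simp [hgdef]
        rw [hf0, hg0, if_pos rfl]
        simp only [pow_zero, mul_one, one_mul]
        rw [← hce]
        ring
      · rcases i with _ | i
        · have hg1 : g 1 = 1 := by simp [hgdef]
          rw [← hcdef, hg1, if_neg (by omega), htdef]
          ring
        · have hgi : g (i + 2) = f.coeff (i + 2) * c ^ i * e ^ (i + 1) := by
            rw [hgdef]; simp only []
            rw [if_neg (by omega), if_neg (by omega)]
            norm_num
          rw [hgi, if_neg (by omega), htdef]
          ring
    rw [hfe, Finset.sum_congr rfl key, Finset.sum_add_distrib]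
    rw [Finset.sum_ite_eq' (Finset.range (D + 1)) 0 (fun _ => (v : A))]
    rw [← Finset.mul_sum, ← hG, hs, mul_zero, add_zero]
    simp
  have hnorm2 : Algebra.norm K ((1 : L) + algebraMap A L t * α) = (u : K) := by
    apply hKL
    rw [hnorm t, hft, hvu]
  have hx0 : ((1 : L) + algebraMap A L t * α) ≠ 0 := by
    intro h
    rw [h] at hnorm2
    rw [Algebra.norm_zero] at hnorm2
    exact u.ne_zero hnorm2.symm
  refine ⟨Units.mk0 _ hx0, ?_⟩
  apply Units.ext
  rw [Units.coe_map]
  simpa using hnorm2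
end
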